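/- Let a = (i/2)·diag(I_k, −I_{n−k}), let g : ℝ → U(n) be smooth with u := g⁻¹g_x taking values in u(n)_a^⊥, and set γ := g a g⁻¹. Then γ_x = g[u, a]g⁻¹, γ_xx = g([u_x, a] + [u, [u, a]])g⁻¹, and [γ, γ_xx] = g u_x g⁻¹. -/

import Mathlib

open Matrix

attribute [local instance] Matrix.normedAddCommGroup Matrix.normedSpace

/-- The centralizer `u(n)_a = {y ∈ u(n) : [y,a] = 0}` of `a` in `u(n)`. -/
def uCent {ι : Type*} [Fintype ι] (a : Matrix ι ι ℂ) : Set (Matrix ι ι ℂ) :=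
  {y | yᴴ = -y ∧ y * a = a * y}

/-- The orthogonal complement `u(n)_a^⊥` of `u(n)_a` in `u(n)` w.r.t. `⟨x,y⟩ = −tr(xy)`. -/
def uPerp {ι : Type*} [Fintype ι] (a : Matrix ι ι ℂ) : Set (Matrix ι ι ℂ) :=
  {y | yᴴ = -y ∧ ∀ z ∈ uCent a, -(y * z).trace = 0}

section Helpers

variable {ι : Type*} [Fintype ι] [DecidableEq ι]

set_option linter.unusedSectionVars false

theorem hasDerivAt_matrix {f : ℝ → Matrix ι ι ℂ} {f' : Matrix ι ι ℂ} {x : ℝ} :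
    HasDerivAt f f' x ↔ ∀ i j, HasDerivAt (fun t => f t i j) (f' i j) x :=
  ⟨fun h i j => hasDerivAt_pi.1 (hasDerivAt_pi.1 h i) j,
   fun h => hasDerivAt_pi.2 fun i => hasDerivAt_pi.2 fun j => h i j⟩

theorem HasDerivAt.matrix_mul {f g : ℝ → Matrix ι ι ℂ} {f' g' : Matrix ι ι ℂ} {x : ℝ}
    (hf : HasDerivAt f f' x) (hg : HasDerivAt g g' x) :
    HasDerivAt (fun t => f t * g t) (f' * g x + f x * g') x := by
  rw [hasDerivAt_matrix] at *
  intro i j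
  simp only [Matrix.add_apply, Matrix.mul_apply]
  refine HasDerivAt.congr_deriv (HasDerivAt.fun_sum fun l _ => (hf i l).fun_mul (hg l j)) ?_
  rw [← Finset.sum_add_distrib]

theorem HasDerivAt.matrix_star {f : ℝ → Matrix ι ι ℂ} {f' : Matrix ι ι ℂ} {x : ℝ}
    (hf : HasDerivAt f f' x) :
    HasDerivAt (fun t => star (f t)) (star f') x := by
  rw [hasDerivAt_matrix] at *
  intro i j
  have h1 : ∀ t, star (f t) i j = (starRingEnd ℂ) (f t j i) := fun t => rfl
  have h2 : star f' i j = (starRingEnd ℂ) (f' j i) := rfl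
  simp only [h1, h2]
  exact ((Complex.conjCLE : ℂ →L[ℝ] ℂ).hasFDerivAt).comp_hasDerivAt x (hf j i)

theorem key_comm (A U V : Matrix ι ι ℂ)
    (hU : U * A = -(A * U)) (hV : V * A = -(A * V))
    (hA : A * A = (-(4:ℂ)⁻¹) • 1) :
    A * ((V * A - A * V) + (U * (U * A - A * U) - (U * A - A * U) * U))
      - ((V * A - A * V) + (U * (U * A - A * U) - (U * A - A * U) * U)) * A = V := by
  have hAU : A * U = -(U * A) := by rw [← neg_neg (A*U), ← hU]
  have hAV : A * V = -(V * A) := by rw [← neg_neg (A*V), ← hV]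
  have h1 : ∀ x : Matrix ι ι ℂ, A * (U * x) = -(U * (A * x)) := by
    intro x; rw [← mul_assoc, hAU, neg_mul, mul_assoc]
  have h2 : ∀ x : Matrix ι ι ℂ, A * (V * x) = -(V * (A * x)) := by
    intro x; rw [← mul_assoc, hAV, neg_mul, mul_assoc]
  have h3 : ∀ x : Matrix ι ι ℂ, A * (A * x) = (-(4:ℂ)⁻¹) • x := by
    intro x; rw [← mul_assoc, hA, smul_mul_assoc, one_mul]
  simp only [mul_sub, sub_mul, mul_add, add_mul, mul_neg, neg_mul, mul_assoc, h1, h2, h3,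
    hAU, hAV, hA, mul_smul_comm, smul_mul_assoc, mul_one, neg_neg, neg_sub, smul_neg]
  module

theorem perp_anticomm {a : Matrix ι ι ℂ} (haH : aᴴ = -a)
    (haa : a * a = (-(4:ℂ)⁻¹) • 1) {y : Matrix ι ι ℂ} (hy : y ∈ uPerp a) :
    y * a = -(a * y) := by
  obtain ⟨hyH, hyT⟩ := hy
  have h3 : ∀ x : Matrix ι ι ℂ, a * (a * x) = (-(4:ℂ)⁻¹) • x := by
    intro x; rw [← mul_assoc, haa, smul_mul_assoc, one_mul]
  set z : Matrix ι ι ℂ := (2⁻¹ : ℂ) • (y - (4:ℂ) • (a * (y * a))) with hz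
  have hzH : zᴴ = -z := by
    rw [hz]
    simp only [conjTranspose_smul, conjTranspose_sub, conjTranspose_mul, haH, hyH,
      Matrix.neg_mul, Matrix.mul_neg, neg_neg, star_inv₀, star_ofNat, mul_assoc]
    module
  have hzA : z * a = a * z := by
    rw [hz]
    simp only [smul_mul_assoc, mul_smul_comm, sub_mul, mul_sub, mul_assoc, h3, haa,
      smul_smul, mul_one]
    module
  have h0 : (y * z).trace = 0 := by
    have := hyT z ⟨hzH, hzA⟩; rwa [neg_eq_zero] at this
  -- trace ((y - z) * z) = 0
  have hyz : y - z = (2⁻¹ : ℂ) • y + (2 : ℂ) • (a * (y * a)) := by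
    rw [hz]; module
  have htr1 : ((a * (y * a)) * z).trace = (-(4:ℂ)⁻¹) * (y * z).trace := by
    rw [show (a * (y * a)) * z = a * ((y * a) * z) by simp only [mul_assoc],
      trace_mul_comm, show ((y * a) * z) * a = y * (a * (z * a)) by simp only [mul_assoc],
      hzA, h3, mul_smul_comm, trace_smul, smul_eq_mul]
  have hA0 : ((y - z) * z).trace = 0 := by
    rw [hyz, add_mul, smul_mul_assoc, smul_mul_assoc, trace_add, trace_smul, trace_smul,
      htr1, h0]
    simp
  have htr2 : (z * z).trace = 0 := by
    rw [sub_mul, trace_sub, h0, zero_sub, neg_eq_zero] at hA0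
    exact hA0
  -- z = 0
  have hzero : z = 0 := by
    have hent : ∀ i j, z j i = -((starRingEnd ℂ) (z i j)) := by
      intro i j
      have := congrFun (congrFun hzH j) i
      rw [Matrix.conjTranspose_apply, Matrix.neg_apply] at this
      have h6 : (starRingEnd ℂ) (z i j) = -(z j i) := this
      rw [h6, neg_neg]
    have hsum : (z * z).trace = -∑ i, ∑ j, ((Complex.normSq (z i j) : ℝ) : ℂ) := by
      rw [Matrix.trace]
      simp only [Matrix.diag_apply, Matrix.mul_apply]
      rw [← Finset.sum_neg_distrib]
      refine Finset.sum_congr rfl fun i _ => ?_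
      rw [← Finset.sum_neg_distrib]
      refine Finset.sum_congr rfl fun j _ => ?_
      rw [hent i j, mul_neg, Complex.mul_conj]
    rw [htr2] at hsum
    have hre : (∑ i : ι, ∑ j : ι, Complex.normSq (z i j)) = 0 := by
      have := congrArg Complex.re hsum.symm
      simpa using this
    ext i j
    have h1 : ∀ i ∈ (Finset.univ : Finset ι), (0:ℝ) ≤ ∑ j, Complex.normSq (z i j) :=
      fun i _ => Finset.sum_nonneg fun j _ => Complex.normSq_nonneg _
    have h2 := (Finset.sum_eq_zero_iff_of_nonneg h1).1 hre i (Finset.mem_univ i)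
    have h4 := (Finset.sum_eq_zero_iff_of_nonneg
      (fun j _ => Complex.normSq_nonneg (z i j))).1 h2 j (Finset.mem_univ j)
    simpa using Complex.normSq_eq_zero.1 h4
  -- conclude
  have hy4 : y = (4:ℂ) • (a * (y * a)) := by
    have h7 : (2⁻¹ : ℂ) • (y - (4:ℂ) • (a * (y * a))) = 0 := by rw [← hz, hzero]
    rcases smul_eq_zero.1 h7 with h | h
    · norm_num at h
    · exact sub_eq_zero.1 h
  calc y * a = ((4:ℂ) • (a * (y * a))) * a := by rw [← hy4]
    _ = (4:ℂ) • (a * (y * (a * a))) := by simp only [smul_mul_assoc, mul_assoc]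
    _ = -(a * y) := by
        rw [haa, mul_smul_comm, mul_one, mul_smul_comm, smul_smul]
        norm_num


end Helpers

/-- for `a = (i/2)·diag(I_k, −I_{n−k})`, `g : ℝ → U(n)` smooth with
`u := g⁻¹g_x` taking values in `u(n)_a^⊥`, and `γ := g a g⁻¹`, one has
`γ_x = g[u,a]g⁻¹`, `γ_xx = g([u_x,a] + [u,[u,a]])g⁻¹`, and `[γ, γ_xx] = g u_x g⁻¹`. -/
theorem stmt9 (k m : ℕ) (hk : 0 < k) (hm : 0 < m)
    (a : Matrix (Fin k ⊕ Fin m) (Fin k ⊕ Fin m) ℂ)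
    (ha : a = (Complex.I / 2) • Matrix.fromBlocks 1 0 0 (-1))
    (g : ℝ → Matrix (Fin k ⊕ Fin m) (Fin k ⊕ Fin m) ℂ)
    (hg : ContDiff ℝ (⊤ : ℕ∞) g)
    (hgU : ∀ x, g x ∈ Matrix.unitaryGroup (Fin k ⊕ Fin m) ℂ)
    (u : ℝ → Matrix (Fin k ⊕ Fin m) (Fin k ⊕ Fin m) ℂ)
    (hu : ∀ x, u x = star (g x) * deriv g x)
    (huP : ∀ x, u x ∈ uPerp a)
    (γ : ℝ → Matrix (Fin k ⊕ Fin m) (Fin k ⊕ Fin m) ℂ)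
    (hγ : ∀ x, γ x = g x * a * star (g x)) :
    -- γ_x = g [u,a] g⁻¹
    (∀ x, deriv γ x = g x * (u x * a - a * u x) * star (g x)) ∧
    -- γ_xx = g ([u_x,a] + [u,[u,a]]) g⁻¹
    (∀ x, deriv (deriv γ) x
        = g x * ((deriv u x * a - a * deriv u x)
            + (u x * (u x * a - a * u x) - (u x * a - a * u x) * u x)) * star (g x)) ∧
    -- [γ, γ_xx] = g u_x g⁻¹
    (∀ x, γ x * deriv (deriv γ) x - deriv (deriv γ) x * γ x
        = g x * deriv u x * star (g x)) := by
  -- basic facts about a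
  have haH : aᴴ = -a := by
    rw [ha, conjTranspose_smul, fromBlocks_conjTranspose]
    simp [Complex.conj_I, ← neg_smul, neg_div]
  have haa : a * a = (-(4:ℂ)⁻¹) • 1 := by
    rw [ha, smul_mul_assoc, mul_smul_comm, smul_smul, fromBlocks_multiply]
    simp only [Matrix.mul_one, Matrix.mul_zero, Matrix.zero_mul, Matrix.neg_mul,
      Matrix.mul_neg, add_zero, zero_add, neg_neg, Matrix.one_mul, neg_zero]
    rw [← fromBlocks_one]
    congr 1
    rw [div_mul_div_comm, Complex.I_mul_I]
    norm_num
  -- unitary facts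
  have hsg : ∀ x, star (g x) * g x = 1 := fun x => (hgU x).1
  have hgs : ∀ x, g x * star (g x) = 1 := fun x => (hgU x).2
  -- differentiability
  have hgdiff : ∀ x, HasDerivAt g (deriv g x) x :=
    fun x => ((hg.differentiable (by simp)) x).hasDerivAt
  have hgderiv : ContDiff ℝ (⊤ : ℕ∞) (deriv g) := (contDiff_infty_iff_deriv.1 hg).2
  have hdgdiff : ∀ x, HasDerivAt (deriv g) (deriv (deriv g) x) x :=
    fun x => ((hgderiv.differentiable (by simp)) x).hasDerivAt
  -- g' = g u
  have hgu : ∀ x, deriv g x = g x * u x := by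
    intro x
    rw [hu, ← mul_assoc, hgs, one_mul]
  -- skew-hermitian u
  have huH : ∀ x, star (u x) = -(u x) := fun x => (huP x).1
  -- derivative of star g
  have hstar : ∀ x, HasDerivAt (fun t => star (g t)) (-(u x) * star (g x)) x := by
    intro x
    have h := (hgdiff x).matrix_star
    rw [hgu x] at h
    have he : star (g x * u x) = -(u x) * star (g x) := by
      rw [StarMul.star_mul, huH x, neg_mul]
    rwa [he] at h
  -- γ as a function
  have hγf : γ = fun t => g t * a * star (g t) := funext hγ
  -- first derivative of γ
  have h1 : ∀ x, HasDerivAt γ (g x * (u x * a - a * u x) * star (g x)) x := by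
    intro x
    rw [hγf]
    refine HasDerivAt.congr_deriv
      (((hgdiff x).matrix_mul (hasDerivAt_const x a)).matrix_mul (hstar x)) ?_
    rw [hgu x]
    noncomm_ring
  have hdγ : deriv γ = fun x => g x * (u x * a - a * u x) * star (g x) :=
    funext fun x => (h1 x).deriv
  -- differentiability of u
  have hudiff : ∀ x, HasDerivAt u (deriv u x) x := by
    intro x
    have hu2 : u = fun x => star (g x) * deriv g x := funext hu
    have : DifferentiableAt ℝ u x := by
      rw [hu2]
      exact ((hgdiff x).matrix_star.matrix_mul (hdgdiff x)).differentiableAt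
    exact this.hasDerivAt
  -- second derivative of γ
  have h2 : ∀ x, HasDerivAt (deriv γ)
      (g x * ((deriv u x * a - a * deriv u x)
        + (u x * (u x * a - a * u x) - (u x * a - a * u x) * u x)) * star (g x)) x := by
    intro x
    rw [hdγ]
    have hP : HasDerivAt (fun t => u t * a - a * u t)
        (deriv u x * a - a * deriv u x) x := by
      refine HasDerivAt.congr_deriv
        (((hudiff x).matrix_mul (hasDerivAt_const x a)).sub
          ((hasDerivAt_const x a).matrix_mul (hudiff x))) ?_
      noncomm_ring
    refine HasDerivAt.congr_deriv
      (((hgdiff x).matrix_mul hP).matrix_mul (hstar x)) ?_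
    rw [hgu x]
    noncomm_ring
  -- anticommutation
  have hanti : ∀ x, u x * a = -(a * u x) := fun x => perp_anticomm haH haa (huP x)
  have hantid : ∀ x, deriv u x * a = -(a * deriv u x) := by
    intro x
    have hF : HasDerivAt (fun t => u t * a + a * u t)
        (deriv u x * a + a * deriv u x) x := by
      refine HasDerivAt.congr_deriv
        (((hudiff x).matrix_mul (hasDerivAt_const x a)).add
          ((hasDerivAt_const x a).matrix_mul (hudiff x))) ?_
      noncomm_ring
    have hF0 : (fun t => u t * a + a * u t) = fun _ => (0 : Matrix (Fin k ⊕ Fin m) (Fin k ⊕ Fin m) ℂ) := by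
      funext t
      rw [hanti t, neg_add_cancel]
    have hF' : HasDerivAt (fun t => u t * a + a * u t)
        (0 : Matrix (Fin k ⊕ Fin m) (Fin k ⊕ Fin m) ℂ) x := by
      rw [hF0]; exact hasDerivAt_const x 0
    have := hF.unique hF'
    linear_combination (norm := noncomm_ring) this
  refine ⟨fun x => (h1 x).deriv, fun x => (h2 x).deriv, ?_⟩
  intro x
  have e2 : deriv (deriv γ) x = _ := (h2 x).deriv
  rw [e2, hγ x]
  set M := (deriv u x * a - a * deriv u x)
    + (u x * (u x * a - a * u x) - (u x * a - a * u x) * u x) with hM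
  have hcancel : ∀ w, star (g x) * (g x * w) = w := by
    intro w; rw [← mul_assoc, hsg, one_mul]
  have hkey : a * M - M * a = deriv u x :=
    key_comm a (u x) (deriv u x) (hanti x) (hantid x) haa
  calc g x * a * star (g x) * (g x * M * star (g x))
        - g x * M * star (g x) * (g x * a * star (g x))
      = g x * ((a * M - M * a) * star (g x)) := by
        simp only [mul_assoc, hcancel]
        noncomm_ring
    _ = g x * deriv u x * star (g x) := by rw [hkey, mul_assoc]
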